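/- Let G = (V,E) be a graph and H ⊆ V a set of vertices such that α(G[H]) = α(G[N[H]]), where N[H] is the closed neighbourhood of H. Then α(G[V \ N[H]]) = α(G) - α(G[H]). -/

import Mathlib

/-- A set of vertices is independent if no two of its members are adjacent. -/
def IsIndepSet {V : Type*} (G : SimpleGraph V) (s : Set V) : Prop :=
  s.Pairwise fun a b => ¬ G.Adj a b

/-- The independence number: the largest cardinality of an independent set. -/
noncomputable def indepNum {V : Type*} (G : SimpleGraph V) : ℕ :=
  sSup {n | ∃ s : Finset V, IsIndepSet G ↑s ∧ s.card = n}

open Classical in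
lemma bddAbove_indep {V : Type*} [Fintype V] (G : SimpleGraph V) :
    BddAbove {n | ∃ s : Finset V, IsIndepSet G ↑s ∧ s.card = n} :=
  ⟨Fintype.card V, fun n ⟨s, _, hc⟩ => hc ▸ Finset.card_le_univ s⟩

lemma le_indepNum {V : Type*} [Fintype V] (G : SimpleGraph V) (s : Finset V)
    (h : IsIndepSet G ↑s) : s.card ≤ indepNum G :=
  le_csSup (bddAbove_indep G) ⟨s, h, rfl⟩

lemma exists_max_indep {V : Type*} [Fintype V] (G : SimpleGraph V) :
    ∃ s : Finset V, IsIndepSet G ↑s ∧ s.card = indepNum G := by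
  have h0 : (0 : ℕ) ∈ {n | ∃ s : Finset V, IsIndepSet G ↑s ∧ s.card = n} :=
    ⟨∅, by simp [IsIndepSet], by simp⟩
  exact Nat.sSup_mem ⟨0, h0⟩ (bddAbove_indep G)

lemma indep_of_induce {V : Type*} {A : Set V} {G : SimpleGraph V} (t : Finset ↥A)
    (h : IsIndepSet (G.induce A) ↑t) :
    ∃ s : Finset V, ↑s ⊆ A ∧ IsIndepSet G ↑s ∧ s.card = t.card := by
  refine ⟨t.map (Function.Embedding.subtype _), ?_, ?_, Finset.card_map _⟩
  · intro x hx
    simp only [Finset.coe_map, Set.mem_image, Finset.mem_coe] at hx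
    obtain ⟨a, _, rfl⟩ := hx
    exact a.2
  · intro x hx y hy hxy
    simp only [Finset.coe_map, Set.mem_image, Finset.mem_coe,
      Function.Embedding.coe_subtype] at hx hy
    obtain ⟨a, ha, rfl⟩ := hx
    obtain ⟨b, hb, rfl⟩ := hy
    have hab : a ≠ b := fun e => hxy (by rw [e])
    exact h ha hb hab

lemma induce_of_indep {V : Type*} {A : Set V} {G : SimpleGraph V} (s : Finset V)
    (hs : ↑s ⊆ A) (h : IsIndepSet G ↑s) :
    ∃ t : Finset ↥A, IsIndepSet (G.induce A) ↑t ∧ t.card = s.card := by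
  refine ⟨s.attach.map ⟨fun x => ⟨x.1, hs x.2⟩, fun a b hab => by
      have h2 := congrArg Subtype.val hab; exact Subtype.ext h2⟩, ?_, by simp⟩
  intro x hx y hy hxy
  simp only [Finset.coe_map, Set.mem_image, Finset.mem_coe, Finset.mem_attach,
    Function.Embedding.coeFn_mk, Set.mem_setOf_eq] at hx hy
  obtain ⟨a, _, rfl⟩ := hx
  obtain ⟨b, _, rfl⟩ := hy
  have hab : (a : V) ≠ (b : V) := fun e => hxy (by ext; exact e)
  exact h a.2 b.2 hab

/-- Total struction / `H`-subgraph reduction: if `α(G[H]) = α(G[N[H]])`, then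
`α(G[V \ N[H]]) = α(G) - α(G[H])`. -/
theorem H_subgraph_reduction {V : Type*} [Fintype V] (G : SimpleGraph V) (H : Set V)
    (hα : indepNum (G.induce H) =
      indepNum (G.induce (H ∪ {v | ∃ h ∈ H, G.Adj v h}))) :
    indepNum (G.induce (H ∪ {v | ∃ h ∈ H, G.Adj v h})ᶜ) =
      indepNum G - indepNum (G.induce H) := by
  classical
  set N : Set V := H ∪ {v | ∃ h ∈ H, G.Adj v h} with hN
  haveI : Fintype ↥Nᶜ := Fintype.ofFinite _
  haveI : Fintype ↥N := Fintype.ofFinite _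
  haveI : Fintype ↥H := Fintype.ofFinite _
  -- Step 1 : α(G) ≥ α(G[Nᶜ]) + α(G[H])
  obtain ⟨t1, ht1, hc1⟩ := exists_max_indep (G.induce Nᶜ)
  obtain ⟨s1, hs1A, hs1I, hs1c⟩ := indep_of_induce t1 ht1
  obtain ⟨t2, ht2, hc2⟩ := exists_max_indep (G.induce H)
  obtain ⟨s2, hs2A, hs2I, hs2c⟩ := indep_of_induce t2 ht2
  have hdisj : Disjoint s1 s2 := by
    rw [Finset.disjoint_left]
    intro x hx1 hx2
    exact (hs1A hx1) (Or.inl (hs2A hx2))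
  have hnoadj : ∀ x ∈ s1, ∀ y ∈ s2, ¬ G.Adj x y := by
    intro x hx y hy hadj
    exact (hs1A hx) (Or.inr ⟨y, hs2A hy, hadj⟩)
  have hunion : IsIndepSet G ↑(s1 ∪ s2) := by
    intro x hx y hy hxy
    simp only [Finset.coe_union, Set.mem_union, Finset.mem_coe] at hx hy
    rcases hx with hx | hx <;> rcases hy with hy | hy
    · exact hs1I hx hy hxy
    · exact hnoadj x hx y hy
    · exact fun h => hnoadj y hy x hx h.symm
    · exact hs2I hx hy hxy
  have step1 : indepNum (G.induce Nᶜ) + indepNum (G.induce H) ≤ indepNum G := by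
    have := le_indepNum G (s1 ∪ s2) hunion
    rw [Finset.card_union_of_disjoint hdisj, hs1c, hs2c, hc1, hc2] at this
    exact this
  -- Step 2 : α(G[Nᶜ]) ≥ α(G) - α(G[H])
  obtain ⟨S, hSI, hSc⟩ := exists_max_indep G
  set Sin := S.filter (· ∈ N) with hSin
  set Sout := S.filter (· ∉ N) with hSout
  have hsub : ∀ ⦃s : Finset V⦄, s ⊆ S → IsIndepSet G ↑s := by
    intro s hss x hx y hy hxy
    exact hSI (hss hx) (hss hy) hxy
  have hin_le : Sin.card ≤ indepNum (G.induce N) := by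
    obtain ⟨t, htI, htc⟩ := induce_of_indep Sin
      (by intro x hx; exact (Finset.mem_filter.mp hx).2)
      (hsub (Finset.filter_subset _ _))
    calc Sin.card = t.card := htc.symm
      _ ≤ _ := le_indepNum _ t htI
  have hout : ↑Sout ⊆ Nᶜ := by
    intro x hx
    exact (Finset.mem_filter.mp hx).2
  obtain ⟨t, htI, htc⟩ := induce_of_indep Sout hout (hsub (Finset.filter_subset _ _))
  have hout_le : Sout.card ≤ indepNum (G.induce Nᶜ) :=
    htc ▸ le_indepNum _ t htI
  have hsplit : Sin.card + Sout.card = S.card := Finset.card_filter_add_card_filter_not _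
  rw [hα]
  omega
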